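/- If K is a simplicial complex in which every vertex has degree at least 2 in the 1-skeleton, then the Morse complex M(K) is minimal, i.e., M(K) contains no dominated vertices. In particular, M(K) is not strongly collapsible. -/

import Mathlib

open Finset

/-- An abstract simplicial complex on vertex type `V`. -/
structure SComplex (V : Type*) where
  faces : Finset V → Prop
  not_empty : ¬ faces ∅
  down_closed : ∀ {σ τ : Finset V}, faces τ → σ ⊆ τ → σ.Nonempty → faces σ

/-- The complex generated by a set of simplices (downward closure). -/
def ofGens {V : Type*} (gens : Set (Finset V)) : SComplex V where
  faces σ := σ.Nonempty ∧ ∃ τ ∈ gens, σ ⊆ τ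
  not_empty h := by simpa using h.1
  down_closed := by
    rintro σ τ ⟨-, τ', hτ', hsub'⟩ hsub hne
    exact ⟨hne, τ', hτ', hsub.trans hsub'⟩

/-- A primitive (gradient) vector field on `K`: a single regular pair `(σ, τ)`
with `σ` a codimension-one face of `τ`. -/
structure VPair {V : Type*} (K : SComplex V) where
  lo : Finset V
  hi : Finset V
  lo_face : K.faces lo
  hi_face : K.faces hi
  lo_sub : lo ⊆ hi
  card_eq : hi.card = lo.card + 1

noncomputable instance {V : Type*} (K : SComplex V) : DecidableEq (VPair K) :=
  Classical.decEq _

/-- Two primitive pairs share no simplex. -/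
def VPair.Compatible {V : Type*} {K : SComplex V} (p q : VPair K) : Prop :=
  p.lo ≠ q.lo ∧ p.lo ≠ q.hi ∧ p.hi ≠ q.lo ∧ p.hi ≠ q.hi

/-- A discrete vector field: each simplex occurs in at most one pair. -/
def IsDVF {V : Type*} {K : SComplex V} (W : Set (VPair K)) : Prop :=
  ∀ p ∈ W, ∀ q ∈ W, p ≠ q → VPair.Compatible p q

/-- Existence of a nontrivial closed `V`-path. -/
def HasClosedPath {V : Type*} {K : SComplex V} (W : Set (VPair K)) : Prop :=
  ∃ k : ℕ, 0 < k ∧ ∃ c : ZMod k → VPair K, (∀ i, c i ∈ W) ∧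
    ∀ i, (c (i + 1)).lo ⊆ (c i).hi ∧ (c (i + 1)).lo ≠ (c i).lo ∧
      (c (i + 1)).lo.card + 1 = (c i).hi.card

/-- A gradient vector field: a discrete vector field with no nontrivial closed path. -/
def IsGVF {V : Type*} {K : SComplex V} (W : Set (VPair K)) : Prop :=
  IsDVF W ∧ ¬ HasClosedPath W

/-- The Morse complex of `K`: vertices are primitive gradient vector fields,
simplices are gradient vector fields. -/
def MorseComplex {V : Type*} (K : SComplex V) : SComplex (VPair K) where
  faces S := S.Nonempty ∧ IsGVF {p | p ∈ S}
  not_empty h := by simpa using h.1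
  down_closed := by
    rintro σ τ ⟨hne', hdvf, hnc⟩ hsub hne
    refine ⟨hne, fun p hp q hq hpq => hdvf p (hsub hp) q (hsub hq) hpq, fun h => hnc ?_⟩
    obtain ⟨k, hk, c, hc, hpath⟩ := h
    exact ⟨k, hk, c, fun i => hsub (hc i), hpath⟩

/-- The pure Morse complex: the subcomplex of `MorseComplex K` generated by the
facets of maximum dimension (maximum gradient vector fields). -/
def pureMorse {V : Type*} (K : SComplex V) : SComplex (VPair K) where
  faces S := (MorseComplex K).faces S ∧ ∃ T : Finset (VPair K), S ⊆ T ∧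
      (MorseComplex K).faces T ∧
      ∀ T' : Finset (VPair K), (MorseComplex K).faces T' → T'.card ≤ T.card
  not_empty h := (MorseComplex K).not_empty h.1
  down_closed := by
    rintro σ τ ⟨hτ, T, hsub', hT, hmax⟩ hsub hne
    exact ⟨(MorseComplex K).down_closed hτ hsub hne, T, hsub.trans hsub', hT, hmax⟩

/-- `σ` is a facet (maximal simplex) of `K`. -/
def IsFacet {V : Type*} (K : SComplex V) (σ : Finset V) : Prop :=
  K.faces σ ∧ ∀ τ, K.faces τ → σ ⊆ τ → σ = τ

/-- `w` dominates `w'`: every facet containing `w'` contains `w`. -/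
def Dominates {V : Type*} (K : SComplex V) (w w' : V) : Prop :=
  ∀ σ, IsFacet K σ → w' ∈ σ → w ∈ σ

/-- `K` is minimal: no vertex dominates another vertex. -/
def MinimalComplex {V : Type*} (K : SComplex V) : Prop :=
  ∀ w w' : V, K.faces {w} → K.faces {w'} → w ≠ w' → ¬ Dominates K w w'

/-- Strong collapsibility of a face predicate: a sequence of removals of
dominated vertices reaching a single point. -/
inductive SCAux {V : Type*} : (Finset V → Prop) → Prop
  | point (F : Finset V → Prop) (v : V) (h : ∀ σ, F σ ↔ σ = {v}) : SCAux F
  | step (F : Finset V → Prop) (w w' : V) (hne : w ≠ w') (hw : F {w}) (hw' : F {w'})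
      (hdom : ∀ σ, (F σ ∧ ∀ τ, F τ → σ ⊆ τ → σ = τ) → w' ∈ σ → w ∈ σ)
      (h : SCAux (fun σ => F σ ∧ w' ∉ σ)) : SCAux F

def StronglyCollapsible {V : Type*} (K : SComplex V) : Prop := SCAux K.faces

/-- `F` strongly collapses to `G` by a sequence of removals of dominated vertices. -/
inductive SCTo {V : Type*} : (Finset V → Prop) → (Finset V → Prop) → Prop
  | refl (F : Finset V → Prop) : SCTo F F
  | step (F G : Finset V → Prop) (w w' : V) (hne : w ≠ w') (hw : F {w}) (hw' : F {w'})
      (hdom : ∀ σ, (F σ ∧ ∀ τ, F τ → σ ⊆ τ → σ = τ) → w' ∈ σ → w ∈ σ)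
      (h : SCTo (fun σ => F σ ∧ w' ∉ σ) G) : SCTo F G

/-- Collapsibility (Forman): removal of free pairs down to a point. -/
inductive CollAux {V : Type*} : (Finset V → Prop) → Prop
  | point (F : Finset V → Prop) (v : V) (h : ∀ σ, F σ ↔ σ = {v}) : CollAux F
  | step (F : Finset V → Prop) (σ τ : Finset V) (hστ : σ ⊂ τ) (hσ : F σ) (hτ : F τ)
      (hfree : ∀ ρ, F ρ → σ ⊂ ρ → ρ = τ)
      (h : CollAux (fun ρ => F ρ ∧ ρ ≠ σ ∧ ρ ≠ τ)) : CollAux F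

def Collapsible {V : Type*} (K : SComplex V) : Prop := CollAux K.faces

/-- The degree of a vertex: the number of edges of `K` containing it. -/
noncomputable def sdeg {V : Type*} (K : SComplex V) (x : V) : ℕ :=
  Set.ncard {σ : Finset V | K.faces σ ∧ σ.card = 2 ∧ x ∈ σ}

/-- Image of a finset, with a classical decidability instance. -/
noncomputable def fimage {V W : Type*} (f : V → W) (σ : Finset V) : Finset W :=
  haveI := Classical.decEq W
  σ.image f

/-- An isomorphism between two simplicial complexes given by face predicates. -/
structure ComplexIso {V W : Type*} (F : Finset V → Prop) (G : Finset W → Prop) where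
  toFun : V → W
  invFun : W → V
  left_inv : ∀ x, F {x} → invFun (toFun x) = x
  right_inv : ∀ y, G {y} → toFun (invFun y) = y
  map_face : ∀ σ, F σ → G (fimage toFun σ)
  inv_face : ∀ τ, G τ → F (fimage invFun τ)

/-- The join of two simplicial complexes. -/
def sJoin {V W : Type*} [DecidableEq V] [DecidableEq W] (K : SComplex V) (L : SComplex W) :
    SComplex (V ⊕ W) :=
  ofGens {σ | ∃ α β, (K.faces α ∨ α = ∅) ∧ (L.faces β ∨ β = ∅) ∧
    σ = α.image Sum.inl ∪ β.image Sum.inr}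

/-- The disjoint union of two simplicial complexes. -/
def sDisjUnion {V W : Type*} [DecidableEq V] [DecidableEq W] (K : SComplex V) (L : SComplex W) :
    SComplex (V ⊕ W) :=
  ofGens ({σ | ∃ α, K.faces α ∧ σ = α.image Sum.inl} ∪
          {σ | ∃ β, L.faces β ∧ σ = β.image Sum.inr})

/-- The simplicial complex of a simple graph (vertices and edges). -/
def graphComplex {V : Type*} [DecidableEq V] (G : SimpleGraph V) : SComplex V :=
  ofGens ({σ | ∃ x, σ = {x}} ∪ {σ | ∃ x y, G.Adj x y ∧ σ = ({x, y} : Finset V)})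

/-- Attach a leaf (pendant edge) to `K` at the vertex `x`. -/
def attachLeaf {V : Type*} [DecidableEq V] (K : SComplex V) (x : V) : SComplex (V ⊕ Unit) :=
  ofGens ({σ | ∃ α, K.faces α ∧ σ = α.image Sum.inl} ∪
          {({Sum.inl x, Sum.inr ()} : Finset (V ⊕ Unit))})

/-- The cycle graph on `ZMod n`. -/
def cycleGraph (n : ℕ) : SimpleGraph (ZMod n) :=
  SimpleGraph.fromRel (fun i j => j = i + 1)

/-- Attach one new leaf to every vertex of a graph. -/
def addLeaves {V : Type*} [DecidableEq V] (G : SimpleGraph V) : SComplex (V ⊕ V) :=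
  ofGens ({σ | ∃ x y, G.Adj x y ∧ σ = ({Sum.inl x, Sum.inl y} : Finset (V ⊕ V))} ∪
          {σ | ∃ u, σ = ({Sum.inl u, Sum.inr u} : Finset (V ⊕ V))})

/-- The geometric realization of `K`, inside `V → ℝ`. -/
def realization {V : Type*} (K : SComplex V) : Set (V → ℝ) :=
  {f | ∃ σ, K.faces σ ∧ (∀ x, 0 ≤ f x) ∧ (∀ x, f x ≠ 0 → x ∈ σ) ∧ ∑ x ∈ σ, f x = 1}

/-- A Hasse-diagram edge of a poset: a covering pair. -/
structure HEdge (P : Type*) [PartialOrder P] where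
  lo : P
  hi : P
  cov : lo ⋖ hi

noncomputable instance {P : Type*} [PartialOrder P] : DecidableEq (HEdge P) :=
  Classical.decEq _

def HEdge.Compat {P : Type*} [PartialOrder P] (p q : HEdge P) : Prop :=
  p.lo ≠ q.lo ∧ p.lo ≠ q.hi ∧ p.hi ≠ q.lo ∧ p.hi ≠ q.hi

def HasPosetCycle {P : Type*} [PartialOrder P] (W : Set (HEdge P)) : Prop :=
  ∃ k : ℕ, 0 < k ∧ ∃ c : ZMod k → HEdge P, (∀ i, c i ∈ W) ∧
    ∀ i, (c (i + 1)).lo ⋖ (c i).hi ∧ (c (i + 1)).lo ≠ (c i).lo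

/-- The generalized Morse complex `f(P)` of a poset: simplices are acyclic
matchings of the Hasse diagram of `P`. -/
def genMorse (P : Type*) [PartialOrder P] : SComplex (HEdge P) where
  faces S := S.Nonempty ∧ (∀ p ∈ S, ∀ q ∈ S, p ≠ q → HEdge.Compat p q) ∧
    ¬ HasPosetCycle {p | p ∈ S}
  not_empty h := by simpa using h.1
  down_closed := by
    rintro σ τ ⟨-, hm, hc⟩ hsub hne
    refine ⟨hne, fun p hp q hq h => hm p (hsub hp) q (hsub hq) h, fun h => hc ?_⟩
    obtain ⟨k, hk, c, hc', hp⟩ := h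
    exact ⟨k, hk, c, fun i => hsub (hc' i), hp⟩

/-- The automorphism group of a simplicial complex, as a subgroup of `Perm V`. -/
def autGroup {V : Type*} [DecidableEq V] (K : SComplex V) : Subgroup (Equiv.Perm V) where
  carrier := {e | ∀ σ : Finset V, K.faces σ ↔ K.faces (σ.image e)}
  one_mem' := by intro σ; simp
  mul_mem' := by
    intro a b ha hb σ
    rw [hb σ, ha (σ.image b)]
    simp [Finset.image_image, Equiv.Perm.coe_mul]
  inv_mem' := by
    intro a ha σ
    have := ha (σ.image ⇑a⁻¹)
    simpa [Finset.image_image, Function.comp_def, Equiv.Perm.inv_def, Equiv.apply_symm_apply,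
      Finset.image_id'] using this.symm

/-- The full subcomplex of `K` on a set `S` of vertices. -/
def restrictTo {V : Type*} (K : SComplex V) (S : Set V) : Finset V → Prop :=
  fun σ => K.faces σ ∧ ∀ x ∈ σ, x ∈ S

/-- `S` spans a fully connected subcomplex: `K = (K∣S) * (K∣Sᶜ)`. -/
def FullyConnected {V : Type*} [DecidableEq V] (K : SComplex V) (S : Set V) : Prop :=
  ∀ σ : Finset V, K.faces σ ↔ (σ.Nonempty ∧ ∃ α β : Finset V,
    (restrictTo K S α ∨ α = ∅) ∧ ((K.faces β ∧ ∀ x ∈ β, x ∉ S) ∨ β = ∅) ∧ σ = α ∪ β)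

/-- The primitive pair `(x, xy)` on an edge `{x,y}`. -/
def edgePair {V : Type*} [DecidableEq V] (K : SComplex V) (x y : V) (hxy : x ≠ y)
    (h : K.faces {x, y}) : VPair K where
  lo := {x}
  hi := {x, y}
  lo_face := K.down_closed h (by simp) (Finset.singleton_nonempty x)
  hi_face := h
  lo_sub := by simp
  card_eq := by
    rw [Finset.card_singleton, Finset.card_insert_of_notMem (by simp [hxy]),
      Finset.card_singleton]

section Aux

variable {V : Type*} (K : SComplex V)

lemma face_nonempty {σ : Finset V} (h : K.faces σ) : σ.Nonempty :=
  Finset.nonempty_iff_ne_empty.mpr (fun he => K.not_empty (he ▸ h))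

lemma VPair.ext' {p q : VPair K} (h1 : p.lo = q.lo) (h2 : p.hi = q.hi) : p = q := by
  cases p; cases q; simp_all

lemma VPair.compat_symm {p q : VPair K} (h : VPair.Compatible p q) :
    VPair.Compatible q p :=
  ⟨h.1.symm, h.2.2.1.symm, h.2.1.symm, h.2.2.2.symm⟩

lemma VPair.ne_of_compat {p q : VPair K} (h : VPair.Compatible p q) : p ≠ q :=
  fun he => h.1 (by rw [he])

lemma singleton_face (p : VPair K) : (MorseComplex K).faces {p} := by
  refine ⟨Finset.singleton_nonempty p, ?_, ?_⟩
  · intro a ha b hb hab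
    simp only [Set.mem_setOf_eq, Finset.mem_singleton] at ha hb
    exact absurd (ha.trans hb.symm) hab
  · rintro ⟨k, hk, c, hc, hpath⟩
    haveI : NeZero k := ⟨hk.ne'⟩
    have e0 : c 0 = p := by simpa using hc 0
    have e1 : c (0 + 1) = p := by simpa using hc (0 + 1)
    exact (hpath 0).2.1 (by rw [e0, e1])

lemma pair_face (p q : VPair K) (hpq : p ≠ q) (hc : VPair.Compatible p q) :
    (MorseComplex K).faces {p, q} := by
  classical
  refine ⟨⟨p, by simp⟩, ?_, ?_⟩
  · intro a ha b hb hab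
    simp only [Set.mem_setOf_eq, Finset.mem_insert, Finset.mem_singleton] at ha hb
    rcases ha with rfl | rfl <;> rcases hb with rfl | rfl
    · exact absurd rfl hab
    · exact hc
    · exact VPair.compat_symm K hc
    · exact absurd rfl hab
  · rintro ⟨k, hk, c, hcm, hpath⟩
    haveI : NeZero k := ⟨hk.ne'⟩
    have hmem : ∀ i, c i = p ∨ c i = q := by
      intro i
      have := hcm i
      simpa using this
    have hstepne : ∀ i : ZMod k, c (i + 1) ≠ c i := fun i h => (hpath i).2.1 (by rw [h])
    set a := c 0 with ha
    set b := c (0 + 1) with hb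
    have hab : a ≠ b := (hstepne 0).symm
    have hc2 : c (0 + 1 + 1) = a := by
      rcases hmem (0 + 1 + 1) with h2 | h2 <;> rcases hmem 0 with h0 | h0 <;>
        rcases hmem (0 + 1) with h1 | h1 <;>
        first
          | (exact absurd (h2.trans h1.symm) (hstepne (0 + 1)))
          | (exact absurd (h0.trans h1.symm) hab)
          | (rw [h2, ← h0])
    have hcab : VPair.Compatible a b := by
      rcases hmem 0 with h0 | h0 <;> rcases hmem (0 + 1) with h1 | h1 <;>
        rw [← ha] at h0 <;> rw [← hb] at h1
      · exact absurd (h0.trans h1.symm) hab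
      · rw [h0, h1]; exact hc
      · rw [h0, h1]; exact VPair.compat_symm K hc
      · exact absurd (h0.trans h1.symm) hab
    have s0 := hpath 0
    have s1 := hpath (0 + 1)
    rw [hc2] at s1
    -- s0 : b.lo ⊆ a.hi ..., s1 : a.lo ⊆ b.hi ...
    have hba : b.lo ⊆ a.hi := s0.1
    have hab' : a.lo ⊆ b.hi := s1.1
    have hcard1 : b.lo.card + 1 = a.hi.card := s0.2.2
    have hcard2 : a.lo.card + 1 = b.hi.card := s1.2.2
    have hae := a.card_eq
    have hbe := b.card_eq
    have hlocard : a.lo.card = b.lo.card := by omega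
    have hloss : a.lo ⊂ a.lo ∪ b.lo := by
      refine Finset.ssubset_iff_of_subset Finset.subset_union_left |>.mpr ?_
      by_contra hno
      push_neg at hno
      have : b.lo ⊆ a.lo := fun x hx => by
        by_contra hxx
        exact hxx (hno x (Finset.mem_union_right _ hx))
      exact hcab.1 (Finset.eq_of_subset_of_card_le this (le_of_eq hlocard)).symm
    have hcardu : a.hi.card ≤ (a.lo ∪ b.lo).card := by
      have := Finset.card_lt_card hloss
      omega
    have hua : a.lo ∪ b.lo ⊆ a.hi := Finset.union_subset a.lo_sub hba
    have hub : a.lo ∪ b.lo ⊆ b.hi := Finset.union_subset hab' b.lo_sub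
    have h1 : a.lo ∪ b.lo = a.hi := Finset.eq_of_subset_of_card_le hua hcardu
    have h2 : a.lo ∪ b.lo = b.hi := Finset.eq_of_subset_of_card_le hub (by omega)
    exact hcab.2.2.2 (h1.symm.trans h2)

lemma exists_facet [Fintype V] (S : Finset (VPair K))
    (hS : (MorseComplex K).faces S) :
    ∃ T, S ⊆ T ∧ IsFacet (MorseComplex K) T := by
  classical
  haveI : Finite (VPair K) :=
    Finite.of_injective (fun p : VPair K => (p.lo, p.hi))
      (fun p q h => VPair.ext' K (congrArg Prod.fst h) (congrArg Prod.snd h))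
  haveI : Fintype (VPair K) := Fintype.ofFinite _
  obtain ⟨T, hT, hmax⟩ := Finset.exists_max_image
    (Finset.univ.filter fun T : Finset (VPair K) => S ⊆ T ∧ (MorseComplex K).faces T)
    (fun T => T.card) ⟨S, by simp [hS]⟩
  simp only [Finset.mem_filter, Finset.mem_univ, true_and] at hT
  refine ⟨T, hT.1, ?_⟩
  unfold IsFacet
  refine ⟨hT.2, fun U hU hTU => ?_⟩
  exact Finset.eq_of_subset_of_card_le hTU
    (hmax U (Finset.mem_filter.mpr ⟨Finset.mem_univ U, hT.1.trans hTU, hU⟩))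

/-- A facet-pair of a simplex of dimension ≥ 1. -/
noncomputable def facetPair (τ : Finset V) (hτ : K.faces τ) (x : V) (hx : x ∈ τ)
    (h2 : 2 ≤ τ.card) : VPair K :=
  haveI := Classical.decEq V
  { lo := τ.erase x
    hi := τ
    lo_face := K.down_closed hτ (Finset.erase_subset _ _)
      (Finset.card_pos.mp (by rw [Finset.card_erase_of_mem hx]; omega))
    hi_face := hτ
    lo_sub := Finset.erase_subset _ _
    card_eq := by rw [Finset.card_erase_of_mem hx]; omega }

lemma second_vpair (v : VPair K) : ∃ p : VPair K, p ≠ v := by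
  classical
  have h1 : 1 ≤ v.lo.card := Finset.card_pos.mpr (face_nonempty K v.lo_face)
  have h2 : 2 ≤ v.hi.card := by have := v.card_eq; omega
  obtain ⟨x₁, hx₁, x₂, hx₂, hx12⟩ := Finset.one_lt_card.mp h2
  set p₁ := facetPair K v.hi v.hi_face x₁ hx₁ h2
  set p₂ := facetPair K v.hi v.hi_face x₂ hx₂ h2
  have hpp : p₁ ≠ p₂ := by
    intro he
    have : v.hi.erase x₁ = v.hi.erase x₂ := congrArg VPair.lo he
    have hm : x₂ ∈ v.hi.erase x₁ := Finset.mem_erase.mpr ⟨hx12.symm, hx₂⟩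
    rw [this] at hm
    exact (Finset.mem_erase.mp hm).1 rfl
  rcases eq_or_ne p₁ v with he | hne
  · exact ⟨p₂, fun h2 => hpp (he.trans h2.symm)⟩
  · exact ⟨p₁, hne⟩

/-- The key construction: given compatible distinct `w w'`, find a pair `p`
compatible with `w'` but sharing a simplex with `w`. -/
lemma blocker [Fintype V] (h : ∀ x : V, K.faces {x} → 2 ≤ sdeg K x)
    (w w' : VPair K) (hcomp : VPair.Compatible w w') :
    ∃ p : VPair K, p ≠ w ∧ ¬ VPair.Compatible p w ∧ VPair.Compatible p w' := by
  classical
  have hlo1 : 1 ≤ w.lo.card := Finset.card_pos.mpr (face_nonempty K w.lo_face)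
  have hlo'1 : 1 ≤ w'.lo.card := Finset.card_pos.mpr (face_nonempty K w'.lo_face)
  have hhi' : 2 ≤ w'.hi.card := by have := w'.card_eq; omega
  have hwlh : w.lo ≠ w.hi := fun he => by
    have := w.card_eq; rw [← he] at this; omega
  rcases Nat.lt_or_ge w.lo.card 2 with hlt | hge
  · -- w.lo = {x}, w.hi = {x, y}
    have hone : w.lo.card = 1 := by omega
    obtain ⟨x, hx⟩ := Finset.card_eq_one.mp hone
    have hhicard : w.hi.card = 2 := by have := w.card_eq; omega
    have hxhi : x ∈ w.hi := w.lo_sub (hx ▸ Finset.mem_singleton_self x)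
    obtain ⟨y, hyhi, hyx⟩ : ∃ y ∈ w.hi, y ≠ x := by
      by_contra hno
      push_neg at hno
      have : w.hi ⊆ {x} := fun z hz => Finset.mem_singleton.mpr (hno z hz)
      have := Finset.card_le_card this
      simp [hhicard] at this
    have hhiXY : w.hi = {x, y} := by
      refine (Finset.eq_of_subset_of_card_le ?_ ?_).symm
      · intro z hz
        rcases Finset.mem_insert.mp hz with rfl | hz'
        · exact hxhi
        · exact Finset.mem_singleton.mp hz' ▸ hyhi
      · rw [hhicard, Finset.card_insert_of_notMem (by simp [Ne.symm hyx]),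
          Finset.card_singleton]
    -- get another edge at x
    have hfx : K.faces {x} := hx ▸ w.lo_face
    have hdeg := h x hfx
    obtain ⟨e, hee, hene⟩ := Set.exists_ne_of_one_lt_ncard (by omega : 1 < sdeg K x) w.hi
    obtain ⟨hef, hec, hxe⟩ := hee
    obtain ⟨z, hze, hzx⟩ : ∃ z ∈ e, z ≠ x := by
      by_contra hno
      push_neg at hno
      have : e ⊆ {x} := fun u hu => Finset.mem_singleton.mpr (hno u hu)
      have := Finset.card_le_card this
      simp [hec] at this
    have heXZ : e = {x, z} := by
      refine (Finset.eq_of_subset_of_card_le ?_ ?_).symm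
      · intro u hu
        rcases Finset.mem_insert.mp hu with rfl | hu'
        · exact hxe
        · exact Finset.mem_singleton.mp hu' ▸ hze
      · rw [hec, Finset.card_insert_of_notMem (by simp [Ne.symm hzx]),
          Finset.card_singleton]
    -- candidate 1 : ({y}, w.hi)
    set p₁ : VPair K :=
      { lo := {y}
        hi := w.hi
        lo_face := K.down_closed w.hi_face (Finset.singleton_subset_iff.mpr hyhi)
          (Finset.singleton_nonempty y)
        hi_face := w.hi_face
        lo_sub := Finset.singleton_subset_iff.mpr hyhi
        card_eq := by rw [hhicard, Finset.card_singleton] } with hp₁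
    -- candidate 2 : (w.lo, e)
    have hxesub : w.lo ⊆ e := hx ▸ Finset.singleton_subset_iff.mpr hxe
    set p₂ : VPair K :=
      { lo := w.lo
        hi := e
        lo_face := w.lo_face
        hi_face := hef
        lo_sub := hxesub
        card_eq := by rw [hec, hone] } with hp₂
    by_cases hbad : w'.lo = {y}
    · -- use p₂
      refine ⟨p₂, ?_, ?_, ?_, ?_, ?_, ?_⟩
      · intro he
        exact hene (congrArg VPair.hi he)
      · intro hcp
        exact hcp.1 rfl
      · show w.lo ≠ w'.lo
        exact hcomp.1
      · show w.lo ≠ w'.hi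
        exact hcomp.2.1
      · show e ≠ w'.lo
        rw [hbad]
        intro he
        rw [he] at hec
        simp at hec
      · show e ≠ w'.hi
        intro he
        have : w'.lo ⊆ e := he ▸ w'.lo_sub
        rw [hbad, heXZ] at this
        have hy : y ∈ ({x, z} : Finset V) := this (Finset.mem_singleton_self y)
        rcases Finset.mem_insert.mp hy with rfl | hy'
        · exact hyx rfl
        · have : y = z := Finset.mem_singleton.mp hy'
          rw [this] at hhiXY
          exact hene (heXZ.trans hhiXY.symm)
    · -- use p₁
      refine ⟨p₁, ?_, ?_, ?_, ?_, ?_, ?_⟩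
      · intro he
        have : ({y} : Finset V) = w.lo := congrArg VPair.lo he
        rw [hx] at this
        exact hyx (Finset.singleton_inj.mp this)
      · intro hcp
        exact hcp.2.2.2 rfl
      · show ({y} : Finset V) ≠ w'.lo
        exact fun he => hbad he.symm
      · show ({y} : Finset V) ≠ w'.hi
        intro he
        rw [← he] at hhi'
        simp at hhi'
      · show w.hi ≠ w'.lo
        exact hcomp.2.2.1
      · show w.hi ≠ w'.hi
        exact hcomp.2.2.2
  · -- |w.lo| ≥ 2 : use facet pairs of w.lo
    obtain ⟨x₁, hx₁, x₂, hx₂, hx12⟩ := Finset.one_lt_card.mp hge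
    have herase : ∀ x ∈ w.lo, (w.lo.erase x).card = w.lo.card - 1 :=
      fun x hx => Finset.card_erase_of_mem hx
    set p₁ := facetPair K w.lo w.lo_face x₁ hx₁ hge with hp₁
    set p₂ := facetPair K w.lo w.lo_face x₂ hx₂ hge with hp₂
    have he12 : w.lo.erase x₁ ≠ w.lo.erase x₂ := by
      intro he
      have hm : x₂ ∈ w.lo.erase x₁ := Finset.mem_erase.mpr ⟨hx12.symm, hx₂⟩
      rw [he] at hm
      exact (Finset.mem_erase.mp hm).1 rfl
    have hkey : ∀ (x : V) (hx : x ∈ w.lo),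
        (facetPair K w.lo w.lo_face x hx hge) ≠ w ∧
        ¬ VPair.Compatible (facetPair K w.lo w.lo_face x hx hge) w := by
      intro x hx
      constructor
      · intro he
        exact hwlh (congrArg VPair.hi he)
      · intro hcp
        exact hcp.2.2.1 rfl
    -- if neither candidate is compatible with w', contradiction
    by_cases hc1 : VPair.Compatible p₁ w'
    · exact ⟨p₁, (hkey x₁ hx₁).1, (hkey x₁ hx₁).2, hc1⟩
    by_cases hc2 : VPair.Compatible p₂ w'
    · exact ⟨p₂, (hkey x₂ hx₂).1, (hkey x₂ hx₂).2, hc2⟩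
    exfalso
    have hhi_ne_lo' : w.lo ≠ w'.lo := hcomp.1
    have hhi_ne_hi' : w.lo ≠ w'.hi := hcomp.2.1
    have hget : ∀ (x : V) (hx : x ∈ w.lo),
        ¬ VPair.Compatible (facetPair K w.lo w.lo_face x hx hge) w' →
        w.lo.erase x = w'.lo ∨ w.lo.erase x = w'.hi := by
      intro x hx hnc
      unfold VPair.Compatible at hnc
      push_neg at hnc
      by_cases h1 : w.lo.erase x = w'.lo
      · exact Or.inl h1
      by_cases h2 : w.lo.erase x = w'.hi
      · exact Or.inr h2
      exact absurd (hnc h1 h2 hhi_ne_lo') hhi_ne_hi'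
    have g1 := hget x₁ hx₁ hc1
    have g2 := hget x₂ hx₂ hc2
    have hcard1 := herase x₁ hx₁
    have hcard2 := herase x₂ hx₂
    have hwce := w'.card_eq
    rcases g1 with g1 | g1 <;> rcases g2 with g2 | g2
    · exact he12 (g1.trans g2.symm)
    · rw [g1] at hcard1; rw [g2] at hcard2; omega
    · rw [g1] at hcard1; rw [g2] at hcard2; omega
    · exact he12 (g1.trans g2.symm)

lemma not_dominates [Fintype V] (h : ∀ x : V, K.faces {x} → 2 ≤ sdeg K x)
    (w w' : VPair K) (hne : w ≠ w') : ¬ Dominates (MorseComplex K) w w' := by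
  classical
  intro hdom
  by_cases hcomp : VPair.Compatible w w'
  · obtain ⟨p, hpw, hpc, hpw'⟩ := blocker K h w w' hcomp
    have hpne' : p ≠ w' := VPair.ne_of_compat K hpw'
    obtain ⟨T, hsub, hTfacet⟩ := exists_facet K {w', p}
      (pair_face K w' p hpne'.symm (VPair.compat_symm K hpw'))
    have hw'T : w' ∈ T := hsub (by simp)
    have hpT : p ∈ T := hsub (by simp)
    have hwT : w ∈ T := hdom T hTfacet hw'T
    exact hpc (hTfacet.1.2.1 p hpT w hwT hpw)
  · obtain ⟨T, hsub, hTfacet⟩ := exists_facet K {w'} (singleton_face K w')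
    have hw'T : w' ∈ T := hsub (by simp)
    have hwT : w ∈ T := hdom T hTfacet hw'T
    exact hcomp (hTfacet.1.2.1 w hwT w' hw'T hne)

end Aux

/-- if every vertex of `K` has degree at least 2, then `M(K)` is
minimal; in particular it is not strongly collapsible. -/
theorem stmt_1 {V : Type*} [Fintype V] (K : SComplex V)
    (h : ∀ x : V, K.faces {x} → 2 ≤ sdeg K x) :
    MinimalComplex (MorseComplex K) ∧ ¬ StronglyCollapsible (MorseComplex K) := by
  have hmin : MinimalComplex (MorseComplex K) := by
    intro w w' _ _ hne
    exact not_dominates K h w w' hne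
  refine ⟨hmin, ?_⟩
  intro hsc
  cases hsc with
  | point F v hF =>
    obtain ⟨p, hp⟩ := second_vpair K v
    have := (hF {p}).mp (singleton_face K p)
    exact hp (Finset.singleton_inj.mp this)
  | step F w w' hne hw hw' hdom _ =>
    exact hmin w w' hw hw' hne (fun σ hσ => hdom σ hσ)
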